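/- The algebra A(q), regarded with its (Z/2)^n-grading, is not σ-graded Frobenius for any σ ∈ (Z/2)^n with σ ≠ (1,1,...,1). -/

import Mathlib

open Finset

inductive AqRel (K : Type) [Field K] (n : ℕ) (q : Fin n → Fin n → K) :
    FreeAlgebra K (Fin n) → FreeAlgebra K (Fin n) → Prop
  | comm : ∀ i j : Fin n, i < j →
      AqRel K n q (FreeAlgebra.ι K j * FreeAlgebra.ι K i)
        (q i j • (FreeAlgebra.ι K i * FreeAlgebra.ι K j))
  | sq : ∀ i : Fin n, AqRel K n q (FreeAlgebra.ι K i * FreeAlgebra.ι K i) 0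

abbrev Aq (K : Type) [Field K] (n : ℕ) (q : Fin n → Fin n → K) : Type :=
  RingQuot (AqRel K n q)

noncomputable def xq (K : Type) [Field K] (n : ℕ) (q : Fin n → Fin n → K) (i : Fin n) :
    Aq K n q :=
  RingQuot.mkAlgHom K (AqRel K n q) (FreeAlgebra.ι K i)

noncomputable def eq' (K : Type) [Field K] (n : ℕ) (q : Fin n → Fin n → K)
    (g : Fin n → ZMod 2) : Aq K n q :=
  ((List.finRange n).map (fun i => if g i = 1 then xq K n q i else 1)).prod

noncomputable def AqGrade (K : Type) [Field K] (n : ℕ) (q : Fin n → Fin n → K)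
    (g : Fin n → ZMod 2) : Submodule K (Aq K n q) :=
  Submodule.span K {eq' K n q g}

namespace Stmt9Aux

lemma zmod2_eq_zero : ∀ a : ZMod 2, a ≠ 1 → a = 0 := by decide

lemma zmod2_neg : ∀ a : ZMod 2, -a = a := by decide

/-- the indicator function δᵢ -/
def dl {n : ℕ} (i : Fin n) : Fin n → ZMod 2 := fun k => if k = i then 1 else 0

lemma dl_self {n : ℕ} (i : Fin n) : dl i i = 1 := if_pos rfl

lemma dl_ne {n : ℕ} {i k : Fin n} (h : k ≠ i) : dl i k = 0 := if_neg h

lemma add_dl_apply_self {n : ℕ} (h : Fin n → ZMod 2) (i : Fin n) :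
    (h + dl i) i = h i + 1 := by simp [dl]

lemma add_dl_apply_ne {n : ℕ} (h : Fin n → ZMod 2) {i k : Fin n} (hk : k ≠ i) :
    (h + dl i) k = h k := by simp [dl, hk]

variable (K : Type) [Field K] (n : ℕ) (q : Fin n → Fin n → K)

local notation "x" => xq K n q
local notation "e" => eq' K n q

lemma xq_sq (i : Fin n) : x i * x i = 0 := by
  have h := RingQuot.mkAlgHom_rel K (AqRel.sq (K := K) (n := n) (q := q) i)
  simpa [xq, map_mul] using h

lemma xq_comm {i j : Fin n} (hij : i < j) :
    x j * x i = q i j • (x i * x j) := by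
  have h := RingQuot.mkAlgHom_rel K (AqRel.comm (K := K) (n := n) (q := q) i j hij)
  simpa [xq, map_mul] using h

/-- partial product over a list -/
noncomputable def P (l : List (Fin n)) (h : Fin n → ZMod 2) : Aq K n q :=
  (l.map (fun j => if h j = 1 then x j else 1)).prod

/-- coefficient -/
noncomputable def cprod (l : List (Fin n)) (i : Fin n) (h : Fin n → ZMod 2) : K :=
  (l.map (fun j => if j < i ∧ h j = 1 then q j i else 1)).prod

lemma eq'_eq_P (h : Fin n → ZMod 2) : e h = P K n q (List.finRange n) h := rfl

lemma cprod_ne_zero (hq : ∀ i j : Fin n, i < j → q i j ≠ 0)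
    (l : List (Fin n)) (i : Fin n) (h : Fin n → ZMod 2) :
    cprod K n q l i h ≠ 0 := by
  apply List.prod_ne_zero
  intro h0
  rcases List.mem_map.mp h0 with ⟨j, _, hj⟩
  by_cases hc : j < i ∧ h j = 1
  · rw [if_pos hc] at hj
    exact hq j i hc.1 hj
  · rw [if_neg hc] at hj
    exact one_ne_zero hj

lemma keyX : ∀ (l : List (Fin n)), l.Pairwise (· < ·) → ∀ (i : Fin n), i ∈ l →
    ∀ h : Fin n → ZMod 2,
    x i * P K n q l h =
      if h i = 1 then 0 else cprod K n q l i h • P K n q l (h + dl i) := by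
  intro l
  induction l with
  | nil => intro _ i hi; exact absurd hi (by simp)
  | cons j l' IH =>
    intro hpw i hi h
    have hpw' : l'.Pairwise (· < ·) := hpw.tail
    have hjl : ∀ k ∈ l', j < k := fun k hk => (List.pairwise_cons.mp hpw).1 k hk
    rcases List.mem_cons.mp hi with rfl | hi'
    · -- head is i
      have hnotin : i ∉ l' := fun hmem => lt_irrefl i (hjl i hmem)
      have hc1 : cprod K n q (i :: l') i h = 1 := by
        unfold cprod
        apply List.prod_eq_one
        intro a ha
        rcases List.mem_map.mp ha with ⟨k, hk, rfl⟩
        rcases List.mem_cons.mp hk with rfl | hk'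
        · rw [if_neg (by simp)]
        · rw [if_neg (by simp [not_lt.mpr (le_of_lt (hjl k hk'))])]
      have hPsame : P K n q l' (h + dl i) = P K n q l' h := by
        unfold P
        congr 1
        apply List.map_congr_left
        intro k hk
        rw [add_dl_apply_ne (h := h) (by rintro rfl; exact hnotin hk)]
      by_cases hhi : h i = 1
      · rw [if_pos hhi]
        unfold P
        rw [List.map_cons, List.prod_cons, if_pos hhi, ← mul_assoc, xq_sq, zero_mul]
      · rw [if_neg hhi, hc1, one_smul]
        unfold P
        rw [List.map_cons, List.prod_cons, if_neg hhi, one_mul,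
          List.map_cons, List.prod_cons, if_pos (by rw [add_dl_apply_self]; rw [zmod2_eq_zero _ hhi]; rfl)]
        congr 1
        exact hPsame.symm
    · -- head j ≠ i, j < i
      have hji : j < i := hjl i hi'
      have hijne : j ≠ i := ne_of_lt hji
      have IH' := IH hpw' i hi' h
      by_cases hhj : h j = 1
      · -- head contributes x j
        unfold P cprod
        rw [List.map_cons, List.prod_cons, if_pos hhj, ← mul_assoc, xq_comm K n q hji,
          smul_mul_assoc, mul_assoc]
        rw [show (l'.map (fun k => if h k = 1 then x k else 1)).prod = P K n q l' h from rfl, IH']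
        by_cases hhi : h i = 1
        · rw [if_pos hhi, if_pos hhi]; simp
        · rw [if_neg hhi, if_neg hhi]
          rw [List.map_cons, List.prod_cons, if_pos ⟨hji, hhj⟩]
          rw [mul_smul_comm, smul_smul]
          rw [List.map_cons, List.prod_cons,
            if_pos (show (h + dl i) j = 1 by rw [add_dl_apply_ne (h := h) hijne]; exact hhj)]
          rfl
      · -- head is 1
        unfold P cprod
        rw [List.map_cons, List.prod_cons, if_neg hhj, one_mul]
        rw [show (l'.map (fun k => if h k = 1 then x k else 1)).prod = P K n q l' h from rfl, IH']
        by_cases hhi : h i = 1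
        · rw [if_pos hhi, if_pos hhi]
        · rw [if_neg hhi, if_neg hhi]
          rw [List.map_cons, List.prod_cons, if_neg (by rintro ⟨_, h2⟩; exact hhj h2), one_mul]
          rw [List.map_cons, List.prod_cons,
            if_neg (by rw [add_dl_apply_ne (h := h) hijne]; exact hhj), one_mul]
          rfl

/-- the coefficient over the full range -/
noncomputable def Cc (i : Fin n) (h : Fin n → ZMod 2) : K :=
  cprod K n q (List.finRange n) i h

lemma xq_mul_eq' (i : Fin n) (h : Fin n → ZMod 2) :
    x i * e h = if h i = 1 then 0 else Cc K n q i h • e (h + dl i) :=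
  keyX K n q (List.finRange n) (List.pairwise_lt_finRange n) i (List.mem_finRange i) h

lemma eq'_zero : e (fun _ => (0 : ZMod 2)) = 1 := by
  unfold eq'
  apply List.prod_eq_one
  intro a ha
  rcases List.mem_map.mp ha with ⟨k, _, rfl⟩
  rw [if_neg (show ¬(0:ZMod 2) = 1 by decide)]

lemma xq_eq_eq' (i : Fin n) : x i = e (dl i) := by
  have h := xq_mul_eq' K n q i (fun _ => 0)
  rw [if_neg (show ¬(0:ZMod 2) = 1 by decide)] at h
  have hC : Cc K n q i (fun _ => 0) = 1 := by
    unfold Cc cprod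
    apply List.prod_eq_one
    intro a ha
    rcases List.mem_map.mp ha with ⟨k, _, rfl⟩
    rw [if_neg (by rintro ⟨_, h2⟩; exact absurd h2 (show ¬(0:ZMod 2) = 1 by decide))]
  have hdl : (fun _ : Fin n => (0 : ZMod 2)) + dl i = dl i := by
    funext k; simp
  rw [eq'_zero, mul_one, hC, one_smul, hdl] at h
  exact h

/-- the span of all the `e g` -/
noncomputable def S : Submodule K (Aq K n q) := Submodule.span K (Set.range (eq' K n q))

lemma eq'_mem_S (g : Fin n → ZMod 2) : e g ∈ S K n q :=
  Submodule.subset_span ⟨g, rfl⟩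

lemma xq_mul_mem_S (i : Fin n) : ∀ v ∈ S K n q, x i * v ∈ S K n q := by
  intro v hv
  induction hv using Submodule.span_induction with
  | mem w hw =>
    rcases hw with ⟨g, rfl⟩
    rw [xq_mul_eq']
    split
    · exact Submodule.zero_mem _
    · exact Submodule.smul_mem _ _ (eq'_mem_S K n q _)
  | zero => rw [mul_zero]; exact Submodule.zero_mem _
  | add a b _ _ ha hb => rw [mul_add]; exact Submodule.add_mem _ ha hb
  | smul c a _ ha => rw [mul_smul_comm]; exact Submodule.smul_mem _ _ ha

lemma P_mul_mem_S : ∀ (l : List (Fin n)) (g : Fin n → ZMod 2), ∀ v ∈ S K n q,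
    P K n q l g * v ∈ S K n q := by
  intro l
  induction l with
  | nil => intro g v hv; unfold P; rw [List.map_nil, List.prod_nil, one_mul]; exact hv
  | cons j l' IH =>
    intro g v hv
    unfold P
    rw [List.map_cons, List.prod_cons, mul_assoc]
    have h2 := IH g v hv
    by_cases hg : g j = 1
    · rw [if_pos hg]; exact xq_mul_mem_S K n q j _ h2
    · rw [if_neg hg, one_mul]; exact h2

lemma S_mul_mem : ∀ u ∈ S K n q, ∀ v ∈ S K n q, u * v ∈ S K n q := by
  intro u hu v hv
  induction hu using Submodule.span_induction with
  | mem w hw => rcases hw with ⟨g, rfl⟩; rw [eq'_eq_P]; exact P_mul_mem_S K n q _ _ _ hv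
  | zero => rw [zero_mul]; exact Submodule.zero_mem _
  | add a b _ _ ha hb => rw [add_mul]; exact Submodule.add_mem _ ha hb
  | smul c a _ ha => rw [smul_mul_assoc]; exact Submodule.smul_mem _ _ ha

lemma mem_S (a : Aq K n q) : a ∈ S K n q := by
  obtain ⟨b, rfl⟩ := RingQuot.mkAlgHom_surjective K (AqRel K n q) a
  refine FreeAlgebra.induction K (Fin n)
    (motive := fun y => (RingQuot.mkAlgHom K (AqRel K n q)) y ∈ S K n q) ?_ ?_ ?_ ?_ b
  · intro c
    rw [AlgHom.commutes]
    rw [Algebra.algebraMap_eq_smul_one]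
    have h1 : (1 : Aq K n q) ∈ S K n q := by
      rw [← eq'_zero K n q]; exact eq'_mem_S K n q _
    exact Submodule.smul_mem _ _ h1
  · intro i
    rw [show (RingQuot.mkAlgHom K (AqRel K n q)) (FreeAlgebra.ι K i) = x i from rfl,
      xq_eq_eq']
    exact eq'_mem_S K n q _
  · intro a b ha hb
    rw [map_mul]
    exact S_mul_mem K n q _ ha _ hb
  · intro a b ha hb
    rw [map_add]; exact Submodule.add_mem _ ha hb

/-! ### A faithful representation -/

noncomputable def rho (i : Fin n) :
    ((Fin n → ZMod 2) → K) →ₗ[K] ((Fin n → ZMod 2) → K) where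
  toFun f := fun g => if g i = 1 then Cc K n q i g * f (g + dl i) else 0
  map_add' f1 f2 := by
    funext g; by_cases h : g i = 1 <;> simp [h, mul_add]
  map_smul' c f := by
    funext g; by_cases h : g i = 1 <;> simp [h] <;> ring

lemma rho_apply (i : Fin n) (f : (Fin n → ZMod 2) → K) (g : Fin n → ZMod 2) :
    rho K n q i f g = if g i = 1 then Cc K n q i g * f (g + dl i) else 0 := rfl

lemma Cc_of_gt {i j : Fin n} (hij : i < j) (g : Fin n → ZMod 2) :
    Cc K n q i (g + dl j) = Cc K n q i g := by
  unfold Cc cprod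
  congr 1
  apply List.map_congr_left
  intro k _
  by_cases hk : k < i
  · rw [add_dl_apply_ne g (ne_of_lt (lt_trans hk hij))]
  · rw [if_neg (fun hc => hk hc.1), if_neg (fun hc => hk hc.1)]

lemma Cc_flip {i j : Fin n} (hij : i < j) (g : Fin n → ZMod 2) (hg : g i = 1) :
    Cc K n q j g = q i j * Cc K n q j (g + dl i) := by
  unfold Cc cprod
  rw [← Fin.prod_univ_def, ← Fin.prod_univ_def]
  have hFi : (if i < j ∧ g i = 1 then q i j else 1) = q i j := if_pos ⟨hij, hg⟩
  have hF'i : (if i < j ∧ (g + dl i) i = 1 then q i j else 1) = 1 := by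
    apply if_neg
    rintro ⟨_, h2⟩
    rw [add_dl_apply_self, hg] at h2
    exact absurd h2 (by decide)
  rw [← Finset.mul_prod_erase Finset.univ _ (Finset.mem_univ i),
      ← Finset.mul_prod_erase Finset.univ
        (fun k => if k < j ∧ (g + dl i) k = 1 then q k j else 1) (Finset.mem_univ i),
      hFi, hF'i, one_mul]
  congr 1
  apply Finset.prod_congr rfl
  intro k hk
  rw [add_dl_apply_ne g (Finset.ne_of_mem_erase hk)]

lemma rho_sq (i : Fin n) :
    (rho K n q i * rho K n q i : Module.End K ((Fin n → ZMod 2) → K)) = 0 := by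
  apply LinearMap.ext
  intro f
  funext g
  rw [Module.End.mul_apply, rho_apply, rho_apply]
  by_cases h : g i = 1
  · rw [if_pos h, if_neg (by rw [add_dl_apply_self, h]; decide), mul_zero]
    rfl
  · rw [if_neg h]; rfl

lemma rho_comm {i j : Fin n} (hij : i < j) :
    (rho K n q j * rho K n q i : Module.End K ((Fin n → ZMod 2) → K)) =
      q i j • (rho K n q i * rho K n q j) := by
  apply LinearMap.ext
  intro f
  funext g
  rw [LinearMap.smul_apply, Pi.smul_apply, smul_eq_mul,
    Module.End.mul_apply, Module.End.mul_apply]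
  simp only [rho_apply]
  have hine : i ≠ j := ne_of_lt hij
  by_cases hgj : g j = 1 <;> by_cases hgi : g i = 1
  · have e1 : (g + dl j) i = 1 := by rw [add_dl_apply_ne g hine]; exact hgi
    have e2 : (g + dl i) j = 1 := by rw [add_dl_apply_ne g hine.symm]; exact hgj
    rw [if_pos hgj, if_pos e1, if_pos hgi, if_pos e2]
    rw [Cc_of_gt K n q hij g, Cc_flip K n q hij g hgi,
      show g + dl j + dl i = g + dl i + dl j by abel]
    ring
  · rw [if_pos hgj, if_neg (show ¬(g + dl j) i = 1 by rw [add_dl_apply_ne g hine]; exact hgi),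
      if_neg hgi, mul_zero, mul_zero]
  · rw [if_neg hgj, if_pos hgi,
      if_neg (show ¬(g + dl i) j = 1 by rw [add_dl_apply_ne g hine.symm]; exact hgj),
      mul_zero, mul_zero]
  · rw [if_neg hgj, if_neg hgi, mul_zero]

noncomputable def rhoA : Aq K n q →ₐ[K] Module.End K ((Fin n → ZMod 2) → K) :=
  RingQuot.liftAlgHom K ⟨FreeAlgebra.lift K (rho K n q), by
    intro a b r
    cases r with
    | sq i =>
      rw [map_mul, map_zero, FreeAlgebra.lift_ι_apply]
      exact rho_sq K n q i
    | comm i j hij =>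
      simp only [map_mul, map_smul, FreeAlgebra.lift_ι_apply]
      exact rho_comm K n q hij⟩

lemma rhoA_x (i : Fin n) : rhoA K n q (x i) = rho K n q i := by
  unfold rhoA xq
  rw [RingQuot.liftAlgHom_mkAlgHom_apply, FreeAlgebra.lift_ι_apply]

/-- delta vectors in the model -/
def dd (S : Fin n → ZMod 2) : (Fin n → ZMod 2) → K := fun t => if t = S then 1 else 0

lemma rho_prod : ∀ (l : List (Fin n)), l.Pairwise (· < ·) → ∀ g : Fin n → ZMod 2,
    (∀ k, g k = 1 → k ∈ l) →
    ((l.map fun i => if g i = 1 then rho K n q i else 1).prod : Module.End K _)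
      (dd K n (fun _ => 0)) = dd K n g := by
  intro l
  induction l with
  | nil =>
    intro _ g hmem
    have hg : g = fun _ => 0 := by
      funext k
      exact zmod2_eq_zero _ (fun h1 => absurd (hmem k h1) List.not_mem_nil)
    rw [List.map_nil, List.prod_nil, hg]
    rfl
  | cons j l' IH =>
    intro hpw g hmem
    have hpw' : l'.Pairwise (· < ·) := hpw.tail
    have hjl : ∀ k ∈ l', j < k := fun k hk => (List.pairwise_cons.mp hpw).1 k hk
    set g' := Function.update g j 0 with hg'def
    have hg'j : g' j = 0 := Function.update_self j 0 g
    have hg'ne : ∀ k, k ≠ j → g' k = g k := fun k hk => Function.update_of_ne hk 0 g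
    have hmap : (l'.map fun i => if g i = 1 then rho K n q i else 1) =
        (l'.map fun i => if g' i = 1 then rho K n q i else 1) := by
      apply List.map_congr_left
      intro k hk
      rw [hg'ne k (fun hkj => lt_irrefl j (hkj ▸ hjl k hk))]
    have hmem' : ∀ k, g' k = 1 → k ∈ l' := by
      intro k h1
      have hkj : k ≠ j := by
        intro hkj; rw [hkj, hg'j] at h1; exact absurd h1 (by decide)
      rcases List.mem_cons.mp (hmem k (by rw [← hg'ne k hkj]; exact h1)) with h | h
      · exact absurd h hkj
      · exact h
    have hinner := IH hpw' g' hmem'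
    rw [List.map_cons, List.prod_cons, Module.End.mul_apply, hmap, hinner]
    by_cases hgj : g j = 1
    · rw [if_pos hgj]
      funext t
      rw [rho_apply]
      by_cases ht : t = g
      · subst ht
        have harg : t + dl j = g' := by
          funext k
          by_cases hk : k = j
          · subst hk; rw [add_dl_apply_self, hgj, hg'j]; decide
          · rw [add_dl_apply_ne t hk, hg'ne k hk]
        have hCc : Cc K n q j t = 1 := by
          unfold Cc cprod
          apply List.prod_eq_one
          intro a ha
          rcases List.mem_map.mp ha with ⟨k, _, rfl⟩
          apply if_neg
          rintro ⟨hk1, hk2⟩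
          rcases List.mem_cons.mp (hmem k hk2) with h | h
          · exact absurd hk1 (h ▸ lt_irrefl j)
          · exact absurd hk1 (not_lt.mpr (le_of_lt (hjl k h)))
        rw [if_pos hgj, harg, hCc, one_mul]
        unfold dd
        rw [if_pos rfl, if_pos rfl]
      · rw [show dd K n g t = 0 from if_neg ht]
        by_cases htj : t j = 1
        · rw [if_pos htj]
          have : t + dl j ≠ g' := by
            intro hcontra
            apply ht
            funext k
            by_cases hk : k = j
            · subst hk; rw [htj, hgj]
            · have := congrFun hcontra k
              rw [add_dl_apply_ne t hk, hg'ne k hk] at this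
              exact this
          rw [show dd K n g' (t + dl j) = 0 from if_neg this, mul_zero]
        · rw [if_neg htj]
    · rw [if_neg hgj]
      have : g' = g := by
        funext k
        by_cases hk : k = j
        · subst hk; rw [hg'j, zmod2_eq_zero _ hgj]
        · exact hg'ne k hk
      rw [this]
      rfl

lemma rhoA_eq' (g : Fin n → ZMod 2) :
    rhoA K n q (e g) (dd K n (fun _ => 0)) = dd K n g := by
  have h1 : rhoA K n q (e g) =
      ((List.finRange n).map fun i => if g i = 1 then rho K n q i else 1).prod := by
    unfold eq'
    rw [map_list_prod, List.map_map]
    congr 1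
    apply List.map_congr_left
    intro i _
    simp only [Function.comp_apply]
    rw [apply_ite (rhoA K n q), map_one, rhoA_x]
  rw [h1]
  exact rho_prod K n q (List.finRange n) (List.pairwise_lt_finRange n) g
    (fun k _ => List.mem_finRange k)

lemma eq'_ne_zero (g : Fin n → ZMod 2) : e g ≠ 0 := by
  intro h0
  have h2 := rhoA_eq' K n q g
  rw [h0, map_zero] at h2
  have h3 := congrFun h2 g
  rw [show dd K n g g = 1 from if_pos rfl] at h3
  simp only [LinearMap.zero_apply, Pi.zero_apply] at h3
  exact zero_ne_one h3

end Stmt9Aux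

/-- **Proposition C (ii), negative part.**  `A(q)` with its `(ℤ/2)ⁿ`-grading is not
`σ`-graded Frobenius for any `σ ≠ (1,…,1)`. -/
theorem stmt9 (K : Type) [Field K] (n : ℕ) (hn : 2 ≤ n)
    (q : Fin n → Fin n → K) (hq : ∀ i j : Fin n, i < j → q i j ≠ 0)
    (σ : Fin n → ZMod 2) (hσ : σ ≠ fun _ => 1) :
    ¬ ∃ φ : Aq K n q ≃ₗ[K] Module.Dual K (Aq K n q),
      (∀ a x y : Aq K n q, φ (a * x) y = φ x (y * a)) ∧
      (∀ g : Fin n → ZMod 2, ∀ x ∈ AqGrade K n q (g + σ),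
        ∀ h : Fin n → ZMod 2, h ≠ -g → ∀ y ∈ AqGrade K n q h, φ x y = 0) := by
  rintro ⟨φ, H1, H2⟩
  obtain ⟨i, hi⟩ := Function.ne_iff.mp hσ
  have hσi : σ i = 0 := Stmt9Aux.zmod2_eq_zero _ hi
  set a := eq' K n q (Stmt9Aux.dl i + σ) with ha
  have hX := Stmt9Aux.xq_mul_eq' K n q i σ
  rw [if_neg (show ¬σ i = 1 from hi)] at hX
  set c := Stmt9Aux.Cc K n q i σ with hc
  have hcne : c ≠ 0 := Stmt9Aux.cprod_ne_zero K n q hq _ i σ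
  have hcomm : σ + Stmt9Aux.dl i = Stmt9Aux.dl i + σ := add_comm _ _
  rw [hcomm] at hX
  have key : ∀ y : Aq K n q, φ a y = 0 := by
    intro y
    have hy := Stmt9Aux.mem_S K n q y
    induction hy using Submodule.span_induction with
    | mem w hw =>
      rcases hw with ⟨h, rfl⟩
      by_cases hh : h = Stmt9Aux.dl i
      · subst hh
        have ha' : a = c⁻¹ • (xq K n q i * eq' K n q σ) := by
          rw [hX, smul_smul, inv_mul_cancel₀ hcne, one_smul]
        rw [ha', map_smul, LinearMap.smul_apply,
          H1 (xq K n q i) (eq' K n q σ) (eq' K n q (Stmt9Aux.dl i)),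
          ← Stmt9Aux.xq_eq_eq' K n q i, Stmt9Aux.xq_sq, map_zero, smul_zero]
      · have hmem1 : a ∈ AqGrade K n q (Stmt9Aux.dl i + σ) :=
          Submodule.mem_span_singleton_self _
        have hneg : -(Stmt9Aux.dl i) = Stmt9Aux.dl i :=
          funext fun k => Stmt9Aux.zmod2_neg _
        exact H2 (Stmt9Aux.dl i) a hmem1 h (by rw [hneg]; exact hh) _
          (Submodule.mem_span_singleton_self _)
    | zero => exact map_zero _
    | add u w _ _ hu hw => rw [map_add, hu, hw, add_zero]
    | smul t u _ hu => rw [map_smul, hu, smul_zero]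
  have hzero : a = 0 := by
    have h0 : φ a = 0 := LinearMap.ext key
    exact φ.injective (by rw [h0, map_zero])
  exact Stmt9Aux.eq'_ne_zero K n q _ hzero
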